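/- Under the stated bi-orthogonality setup, for every m ≥ 1 and all z ∈ ℂ: B^{(1)}_{m-1}(z) G_m(z) − V_m(z) G^{(1)}_{m-1}(z) = 0 (the N×N zero matrix). -/

import Mathlib

open Polynomial Matrix Finset

noncomputable section

/-- `N × N` matrices with polynomial entries, viewed as matrix polynomials. -/
abbrev MatPoly (N : ℕ) := Matrix (Fin N) (Fin N) (Polynomial ℂ)

/-- Evaluation of a matrix polynomial at a complex number (entrywise evaluation). -/
def evalM {N : ℕ} (Q : MatPoly N) (z : ℂ) : Matrix (Fin N) (Fin N) ℂ :=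
  Q.map (Polynomial.eval z)

/-- Composition of a matrix polynomial with a scalar polynomial `h` (entrywise). -/
def compH {N : ℕ} (Q : MatPoly N) (h : Polynomial ℂ) : MatPoly N :=
  Q.map fun p => p.comp h

/-- The vector polynomial `P₀(x) = [1, x, …, x^{N-1}]ᵀ`. -/
def P0 (N : ℕ) : Fin N → Polynomial ℂ := fun i => Polynomial.X ^ (i : ℕ)

/-- Action of a vector of linear functionals `U` on a vector polynomial `P`:
the matrix with `(i,j)` entry `u^j(p_i)`. -/
def applyU {N : ℕ} (U : Fin N → (Polynomial ℂ →ₗ[ℂ] ℂ)) (P : Fin N → Polynomial ℂ) :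
    Matrix (Fin N) (Fin N) ℂ := Matrix.of fun i j => U j (P i)

/-- The vector polynomial `B(x) = V(h(x)) P₀(x)` associated to a matrix polynomial `V`. -/
def Bvec {N : ℕ} (V : MatPoly N) (h : Polynomial ℂ) : Fin N → Polynomial ℂ :=
  (compH V h).mulVec (P0 N)

/-- `((Qᵀ U)(P))_{i,j} = Σ_s u^s (Q_{s,j} p_i)`. -/
def transApply {N : ℕ} (U : Fin N → (Polynomial ℂ →ₗ[ℂ] ℂ)) (Q : MatPoly N)
    (P : Fin N → Polynomial ℂ) : Matrix (Fin N) (Fin N) ℂ :=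
  Matrix.of fun i j => ∑ s, U s (Q s j * P i)

/-- The difference quotient `(p(z) - p(h(x)))/(z - h(x))` as a polynomial in the outer
variable `z` with coefficients polynomials in the inner variable `x`. -/
def diffQuot (p h : Polynomial ℂ) : Polynomial (Polynomial ℂ) :=
  (p.map (Polynomial.C : ℂ →+* Polynomial ℂ) - Polynomial.C (p.comp h)) /ₘ
    (Polynomial.X - Polynomial.C h)

/-- Apply a linear functional to the (inner-variable) coefficients of a two-variable
polynomial, leaving a polynomial in the outer variable. -/
def applyCoeff (u : Polynomial ℂ →ₗ[ℂ] ℂ) (q : Polynomial (Polynomial ℂ)) : Polynomial ℂ :=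
  q.sum fun n a => Polynomial.monomial n (u a)

/-- The first kind associated polynomial built from `W = V_{m+1}`:
`B⁽¹⁾_m(z) = U_x( ((W(z) - W(h(x)))/(z - h(x))) · P₀(x) )`. -/
def assocB {N : ℕ} (U : Fin N → (Polynomial ℂ →ₗ[ℂ] ℂ)) (W : MatPoly N) (h : Polynomial ℂ) :
    MatPoly N :=
  Matrix.of fun i j =>
    applyCoeff (U j) (∑ s, diffQuot (W i s) h * Polynomial.C (Polynomial.X ^ (s : ℕ)))

/-- The first kind associated polynomial built from `W = G_{m+1}`:
`G⁽¹⁾_m(z) = ( ((W(z) - W(h(x)))ᵀ/(z - h(x))) U_x )(P₀(x))`. -/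
def assocG {N : ℕ} (U : Fin N → (Polynomial ℂ →ₗ[ℂ] ℂ)) (W : MatPoly N) (h : Polynomial ℂ) :
    MatPoly N :=
  Matrix.of fun i j =>
    ∑ s, applyCoeff (U s) (diffQuot (W s j) h * Polynomial.C (Polynomial.X ^ (i : ℕ)))

/-- The shifted sequence of first kind associated polynomials: `B1seq U V h k = B⁽¹⁾_{k-1}`,
with the convention `B⁽¹⁾_{-1} = 0`. -/
def B1seq {N : ℕ} (U : Fin N → (Polynomial ℂ →ₗ[ℂ] ℂ)) (V : ℕ → MatPoly N)
    (h : Polynomial ℂ) : ℕ → MatPoly N :=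
  fun k => if k = 0 then 0 else assocB U (V k) h

/-- The shifted sequence `G1seq U G h k = G⁽¹⁾_{k-1}`, with `G⁽¹⁾_{-1} = 0`. -/
def G1seq {N : ℕ} (U : Fin N → (Polynomial ℂ →ₗ[ℂ] ℂ)) (G : ℕ → MatPoly N)
    (h : Polynomial ℂ) : ℕ → MatPoly N :=
  fun k => if k = 0 then 0 else assocG U (G k) h

namespace FKWaux

open Polynomial

lemma coeff_applyCoeff (u : Polynomial ℂ →ₗ[ℂ] ℂ) (q : Polynomial (Polynomial ℂ)) (n : ℕ) :
    (applyCoeff u q).coeff n = u (q.coeff n) := by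
  unfold applyCoeff Polynomial.sum
  rw [Polynomial.finset_sum_coeff]
  simp only [Polynomial.coeff_monomial]
  rw [Finset.sum_ite_eq' q.support n (fun m => u (q.coeff m))]
  split_ifs with hmem
  · rfl
  · rw [Polynomial.notMem_support_iff.mp hmem, map_zero]

lemma applyCoeff_sum (u : Polynomial ℂ →ₗ[ℂ] ℂ) {ι : Type*} (S : Finset ι)
    (f : ι → Polynomial (Polynomial ℂ)) :
    applyCoeff u (∑ s ∈ S, f s) = ∑ s ∈ S, applyCoeff u (f s) := by
  ext n
  rw [Polynomial.finset_sum_coeff, coeff_applyCoeff, Polynomial.finset_sum_coeff, map_sum]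
  exact Finset.sum_congr rfl fun s _ => (coeff_applyCoeff u (f s) n).symm

lemma applyCoeff_mul_mapC (u : Polynomial ℂ →ₗ[ℂ] ℂ) (q : Polynomial (Polynomial ℂ))
    (p : Polynomial ℂ) :
    applyCoeff u q * p = applyCoeff u (q * p.map (Polynomial.C : ℂ →+* Polynomial ℂ)) := by
  ext n
  rw [Polynomial.coeff_mul, coeff_applyCoeff, Polynomial.coeff_mul, map_sum]
  apply Finset.sum_congr rfl
  intro x _
  rw [coeff_applyCoeff, Polynomial.coeff_map, mul_comm (q.coeff x.1),
    ← Polynomial.smul_eq_C_mul, LinearMap.map_smul, smul_eq_mul, mul_comm]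

lemma mapC_mul_applyCoeff (u : Polynomial ℂ →ₗ[ℂ] ℂ) (q : Polynomial (Polynomial ℂ))
    (p : Polynomial ℂ) :
    p * applyCoeff u q = applyCoeff u (p.map (Polynomial.C : ℂ →+* Polynomial ℂ) * q) := by
  rw [mul_comm, applyCoeff_mul_mapC, mul_comm]

lemma XsubC_mul_diffQuot (p h : Polynomial ℂ) :
    (Polynomial.X - Polynomial.C h) * diffQuot p h
      = p.map (Polynomial.C : ℂ →+* Polynomial ℂ) - Polynomial.C (p.comp h) := by
  apply Polynomial.mul_divByMonic_eq_iff_isRoot.mpr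
  simp only [Polynomial.IsRoot, Polynomial.eval_sub, Polynomial.eval_map, Polynomial.eval_C]
  rw [Polynomial.comp, sub_self]

lemma coeff_of_XsubC_mul {R : Type*} [CommRing R] [IsDomain R] (h : R) (D Nu : Polynomial R)
    (hD : (Polynomial.X - Polynomial.C h) * D = Nu) (d : ℕ) (hdeg : Nu.natDegree ≤ d) :
    ∀ n, D.coeff n = ∑ p ∈ Finset.Ioc n d, Nu.coeff p * h ^ (p - 1 - n) := by
  have hzero : ∀ n, d ≤ n → D.coeff n = 0 := by
    intro n hn
    rcases eq_or_ne D 0 with h0 | h0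
    · simp [h0]
    · have hXC : (Polynomial.X - Polynomial.C h) ≠ 0 := (Polynomial.monic_X_sub_C h).ne_zero
      have hND : Nu.natDegree = 1 + D.natDegree := by
        rw [← hD, Polynomial.natDegree_mul hXC h0, Polynomial.natDegree_X_sub_C]
      apply Polynomial.coeff_eq_zero_of_natDegree_lt
      omega
  have key : ∀ n, Nu.coeff (n + 1) = D.coeff n - h * D.coeff (n + 1) := by
    intro n
    rw [← hD, sub_mul, Polynomial.coeff_sub, Polynomial.coeff_X_mul, Polynomial.coeff_C_mul]
  suffices H : ∀ t n, d ≤ n + t →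
      D.coeff n = ∑ p ∈ Finset.Ioc n d, Nu.coeff p * h ^ (p - 1 - n) by
    intro n; exact H d n (by omega)
  intro t
  induction t with
  | zero =>
    intro n hn
    rw [hzero n (by omega), Finset.Ioc_eq_empty (by omega), Finset.sum_empty]
  | succ t ih =>
    intro n hn
    by_cases hnd : d ≤ n
    · rw [hzero n hnd, Finset.Ioc_eq_empty (by omega), Finset.sum_empty]
    · push_neg at hnd
      have h1 : D.coeff n = Nu.coeff (n + 1) + h * D.coeff (n + 1) := by
        rw [key n]; ring
      rw [h1, ih (n + 1) (by omega)]
      have hins : Finset.Ioc n d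
          = (Finset.Ioc (n + 1) d).cons (n + 1) Finset.left_notMem_Ioc := by
        rw [← Finset.Icc_eq_cons_Ioc (by omega), Finset.Icc_add_one_left_eq_Ioc]
      rw [hins, Finset.sum_cons]
      congr 1
      · simp
      · rw [Finset.mul_sum]
        apply Finset.sum_congr rfl
        intro p hp
        simp only [Finset.mem_Ioc] at hp
        have he : p - 1 - n = (p - 1 - (n + 1)) + 1 := by omega
        rw [he, pow_succ]
        ring

lemma evalM_mul {N : ℕ} (P Q : MatPoly N) (z : ℂ) :
    evalM (P * Q) z = evalM P z * evalM Q z := by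
  ext i j
  simp [evalM, Matrix.mul_apply, Matrix.map_apply, Polynomial.eval_finset_sum]

lemma matPoly_ext {N : ℕ} {P Q : MatPoly N} (hz : ∀ z, evalM P z = evalM Q z) : P = Q := by
  apply Matrix.ext; intro i j
  apply Polynomial.funext
  intro z
  have h3 : evalM P z i j = evalM Q z i j := by rw [hz z]
  simpa [evalM, Matrix.map_apply] using h3

/-- entrywise `C` lift of a scalar matrix -/
def MC {N : ℕ} (M : Matrix (Fin N) (Fin N) ℂ) : MatPoly N := M.map fun a => Polynomial.C a

lemma evalM_MC_mul {N : ℕ} (M : Matrix (Fin N) (Fin N) ℂ) (Q : MatPoly N) (z : ℂ) :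
    evalM (MC M * Q) z = M * evalM Q z := by
  ext i j
  simp [evalM, MC, Matrix.mul_apply, Matrix.map_apply, Polynomial.eval_finset_sum]

lemma evalM_mul_MC {N : ℕ} (M : Matrix (Fin N) (Fin N) ℂ) (Q : MatPoly N) (z : ℂ) :
    evalM (Q * MC M) z = evalM Q z * M := by
  ext i j
  simp [evalM, MC, Matrix.mul_apply, Matrix.map_apply, Polynomial.eval_finset_sum]

lemma evalM_Xsmul {N : ℕ} (Q : MatPoly N) (z : ℂ) :
    evalM ((Polynomial.X : Polynomial ℂ) • Q) z = z • evalM Q z := by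
  ext i j
  simp [evalM, Matrix.smul_apply, Matrix.map_apply, smul_eq_mul]

lemma evalM_sub {N : ℕ} (P Q : MatPoly N) (z : ℂ) :
    evalM (P - Q) z = evalM P z - evalM Q z := by
  ext i j
  simp [evalM, Matrix.sub_apply, Matrix.map_apply]

lemma MC_mul_MC {N : ℕ} (M M' : Matrix (Fin N) (Fin N) ℂ) : MC M * MC M' = MC (M * M') := by
  ext i j
  simp [MC, Matrix.mul_apply, Matrix.map_apply, map_sum]

lemma MC_one {N : ℕ} : MC (1 : Matrix (Fin N) (Fin N) ℂ) = 1 := by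
  ext i j
  by_cases hij : i = j <;> simp [MC, Matrix.map_apply, Matrix.one_apply, hij]

lemma natDeg_MC_mul {N : ℕ} (M : Matrix (Fin N) (Fin N) ℂ) (Q : MatPoly N) (d : ℕ)
    (hQ : ∀ i j, (Q i j).natDegree ≤ d) : ∀ i j, ((MC M * Q) i j).natDegree ≤ d := by
  intro i j
  rw [Matrix.mul_apply]
  apply Polynomial.natDegree_sum_le_of_forall_le
  intro k _
  refine Polynomial.natDegree_mul_le.trans ?_
  have h0 : ((MC M) i k).natDegree = 0 := by simp [MC, Matrix.map_apply]
  rw [h0, zero_add]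
  exact hQ k j

lemma natDeg_mul_MC {N : ℕ} (M : Matrix (Fin N) (Fin N) ℂ) (Q : MatPoly N) (d : ℕ)
    (hQ : ∀ i j, (Q i j).natDegree ≤ d) : ∀ i j, ((Q * MC M) i j).natDegree ≤ d := by
  intro i j
  rw [Matrix.mul_apply]
  apply Polynomial.natDegree_sum_le_of_forall_le
  intro k _
  refine Polynomial.natDegree_mul_le.trans ?_
  have h0 : ((MC M) k j).natDegree = 0 := by simp [MC, Matrix.map_apply]
  rw [h0, add_zero]
  exact hQ i k
lemma applyCoeff_sub (u : Polynomial ℂ →ₗ[ℂ] ℂ) (q r : Polynomial (Polynomial ℂ)) :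
    applyCoeff u (q - r) = applyCoeff u q - applyCoeff u r := by
  ext n
  rw [Polynomial.coeff_sub, coeff_applyCoeff, coeff_applyCoeff, coeff_applyCoeff,
    Polynomial.coeff_sub, map_sub]

lemma key_identity {N : ℕ} (U : Fin N → (Polynomial ℂ →ₗ[ℂ] ℂ)) (h : Polynomial ℂ)
    (W Hm : MatPoly N) (m : ℕ)
    (hWdeg : ∀ i j, (W i j).natDegree ≤ m + 1)
    (hHdeg : ∀ i j, (Hm i j).natDegree ≤ m + 1)
    (hl : ∀ k < m + 1, applyU U (fun i => h ^ k * Bvec W h i) = 0)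
    (hr : ∀ j < m + 1, transApply U (compH Hm h) (fun i => h ^ j * P0 N i) = 0) :
    assocB U W h * Hm = W * assocG U Hm h := by
  apply Matrix.ext; intro i j
  rw [Matrix.mul_apply, Matrix.mul_apply]
  set D : Fin N → Fin N → Polynomial (Polynomial ℂ) := fun k s =>
    diffQuot (W i s) h * (Hm k j).map (C : ℂ →+* Polynomial ℂ)
      - (W i s).map (C : ℂ →+* Polynomial ℂ) * diffQuot (Hm k j) h with hDdef
  have hL : ∀ k, assocB U W h i k * Hm k j
      = applyCoeff (U k) (∑ s, diffQuot (W i s) h * (Hm k j).map (C : ℂ →+* Polynomial ℂ)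
          * C (X ^ (s : ℕ))) := by
    intro k
    have h0 : assocB U W h i k
        = applyCoeff (U k) (∑ s, diffQuot (W i s) h * C (X ^ (s : ℕ))) := rfl
    rw [h0, applyCoeff_mul_mapC]
    congr 1
    rw [Finset.sum_mul]
    exact Finset.sum_congr rfl fun s _ => by ring
  have hR : ∀ k, W i k * assocG U Hm h k j
      = ∑ s, applyCoeff (U s) ((W i k).map (C : ℂ →+* Polynomial ℂ)
          * (diffQuot (Hm s j) h * C (X ^ (k : ℕ)))) := by
    intro k
    have h0 : assocG U Hm h k j
        = ∑ s, applyCoeff (U s) (diffQuot (Hm s j) h * C (X ^ (k : ℕ))) := rfl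
    rw [h0, Finset.mul_sum]
    exact Finset.sum_congr rfl fun s _ => mapC_mul_applyCoeff _ _ _
  have hRtot : (∑ k, W i k * assocG U Hm h k j)
      = ∑ k, applyCoeff (U k) (∑ s, (W i s).map (C : ℂ →+* Polynomial ℂ)
          * (diffQuot (Hm k j) h * C (X ^ (s : ℕ)))) := by
    rw [Finset.sum_congr rfl fun k _ => hR k, Finset.sum_comm]
    exact Finset.sum_congr rfl fun k _ => (applyCoeff_sum _ _ _).symm
  rw [Finset.sum_congr rfl fun k _ => hL k, hRtot, ← sub_eq_zero, ← Finset.sum_sub_distrib]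
  have hDsum : ∀ k : Fin N,
      applyCoeff (U k) (∑ s, diffQuot (W i s) h * (Hm k j).map (C : ℂ →+* Polynomial ℂ)
          * C (X ^ (s : ℕ)))
        - applyCoeff (U k) (∑ s, (W i s).map (C : ℂ →+* Polynomial ℂ)
            * (diffQuot (Hm k j) h * C (X ^ (s : ℕ))))
      = applyCoeff (U k) (∑ s, D k s * C (X ^ (s : ℕ))) := by
    intro k
    rw [← applyCoeff_sub]
    congr 1
    rw [← Finset.sum_sub_distrib]
    refine Finset.sum_congr rfl fun s _ => ?_
    simp only [hDdef]
    ring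
  rw [Finset.sum_congr rfl fun k _ => hDsum k]
  refine Polynomial.ext fun n => ?_
  rw [Polynomial.finset_sum_coeff, Polynomial.coeff_zero]
  have hco : ∀ k, (applyCoeff (U k) (∑ s, D k s * C (X ^ (s : ℕ)))).coeff n
      = U k (∑ s, (D k s).coeff n * X ^ (s : ℕ)) := by
    intro k
    rw [coeff_applyCoeff]
    congr 1
    rw [Polynomial.finset_sum_coeff]
    exact Finset.sum_congr rfl fun s _ => by rw [Polynomial.coeff_mul_C]
  rw [Finset.sum_congr rfl fun k _ => hco k]
  have hDco : ∀ k s, (D k s).coeff n = ∑ p ∈ Finset.Ioc n (m + 1),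
      (C ((W i s).coeff p) * ((Hm k j).comp h)
        - (W i s).comp h * C ((Hm k j).coeff p)) * h ^ (p - 1 - n) := by
    intro k s
    have h1 := XsubC_mul_diffQuot (W i s) h
    have h2 := XsubC_mul_diffQuot (Hm k j) h
    have hnum : (X - C h) * D k s
        = (W i s).map (C : ℂ →+* Polynomial ℂ) * C ((Hm k j).comp h)
          - C ((W i s).comp h) * (Hm k j).map (C : ℂ →+* Polynomial ℂ) := by
      simp only [hDdef]
      linear_combination (Hm k j).map (C : ℂ →+* Polynomial ℂ) * h1
        - (W i s).map (C : ℂ →+* Polynomial ℂ) * h2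
    have hdeg' : ((W i s).map (C : ℂ →+* Polynomial ℂ) * C ((Hm k j).comp h)
          - C ((W i s).comp h) * (Hm k j).map (C : ℂ →+* Polynomial ℂ)).natDegree ≤ m + 1 := by
      refine (Polynomial.natDegree_sub_le _ _).trans (max_le ?_ ?_) <;>
        refine Polynomial.natDegree_mul_le.trans ?_
      · rw [Polynomial.natDegree_C, add_zero]
        exact Polynomial.natDegree_map_le.trans (hWdeg i s)
      · rw [Polynomial.natDegree_C, zero_add]
        exact Polynomial.natDegree_map_le.trans (hHdeg k j)
    rw [coeff_of_XsubC_mul h (D k s) _ hnum (m + 1) hdeg' n]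
    refine Finset.sum_congr rfl fun p _ => ?_
    congr 1
    rw [Polynomial.coeff_sub, Polynomial.coeff_mul_C, Polynomial.coeff_C_mul,
      Polynomial.coeff_map, Polynomial.coeff_map]
  have hsplit : ∀ k : Fin N, U k (∑ s, (D k s).coeff n * X ^ (s : ℕ))
      = (∑ p ∈ Finset.Ioc n (m + 1), ∑ s, ((W i s).coeff p)
            * U k ((Hm k j).comp h * (h ^ (p - 1 - n) * X ^ (s : ℕ))))
        - (∑ p ∈ Finset.Ioc n (m + 1), ∑ s, ((Hm k j).coeff p)
            * U k ((W i s).comp h * (h ^ (p - 1 - n) * X ^ (s : ℕ)))) := by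
    intro k
    have harg : (∑ s, (D k s).coeff n * X ^ (s : ℕ))
        = (∑ p ∈ Finset.Ioc n (m + 1), ∑ s, ((W i s).coeff p)
              • ((Hm k j).comp h * (h ^ (p - 1 - n) * X ^ (s : ℕ))))
          - (∑ p ∈ Finset.Ioc n (m + 1), ∑ s, ((Hm k j).coeff p)
              • ((W i s).comp h * (h ^ (p - 1 - n) * X ^ (s : ℕ)))) := by
      calc (∑ s, (D k s).coeff n * X ^ (s : ℕ))
          = ∑ s, ∑ p ∈ Finset.Ioc n (m + 1),
              (((W i s).coeff p) • ((Hm k j).comp h * (h ^ (p - 1 - n) * X ^ (s : ℕ)))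
                - ((Hm k j).coeff p) • ((W i s).comp h * (h ^ (p - 1 - n) * X ^ (s : ℕ)))) := by
            refine Finset.sum_congr rfl fun s _ => ?_
            rw [hDco k s, Finset.sum_mul]
            refine Finset.sum_congr rfl fun p _ => ?_
            simp only [Polynomial.smul_eq_C_mul]
            ring
        _ = ∑ p ∈ Finset.Ioc n (m + 1), ∑ s,
              (((W i s).coeff p) • ((Hm k j).comp h * (h ^ (p - 1 - n) * X ^ (s : ℕ)))
                - ((Hm k j).coeff p) • ((W i s).comp h * (h ^ (p - 1 - n) * X ^ (s : ℕ)))) :=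
            Finset.sum_comm
        _ = _ := by
            rw [← Finset.sum_sub_distrib]
            exact Finset.sum_congr rfl fun p _ => Finset.sum_sub_distrib _ _
    rw [harg, map_sub, map_sum, map_sum]
    congr 1 <;>
    · refine Finset.sum_congr rfl fun p _ => ?_
      rw [map_sum]
      exact Finset.sum_congr rfl fun s _ => by rw [LinearMap.map_smul, smul_eq_mul]
  rw [Finset.sum_congr rfl fun k _ => hsplit k, Finset.sum_sub_distrib]
  have hT1 : (∑ k : Fin N, ∑ p ∈ Finset.Ioc n (m + 1), ∑ s, ((W i s).coeff p)
      * U k ((Hm k j).comp h * (h ^ (p - 1 - n) * X ^ (s : ℕ)))) = 0 := by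
    rw [Finset.sum_comm]
    refine Finset.sum_eq_zero fun p hp => ?_
    rw [Finset.sum_comm]
    refine Finset.sum_eq_zero fun s _ => ?_
    have hpm : p - 1 - n < m + 1 := by
      simp only [Finset.mem_Ioc] at hp; omega
    have hz := hr (p - 1 - n) hpm
    have hent : (∑ k, U k ((Hm k j).comp h * (h ^ (p - 1 - n) * X ^ (s : ℕ)))) = 0 := by
      have h0 : transApply U (compH Hm h) (fun i' => h ^ (p - 1 - n) * P0 N i') s j = 0 := by
        rw [hz]; rfl
      simpa [transApply, compH, Matrix.map_apply, P0] using h0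
    rw [← Finset.mul_sum, hent, mul_zero]
  have hT2 : (∑ k : Fin N, ∑ p ∈ Finset.Ioc n (m + 1), ∑ s, ((Hm k j).coeff p)
      * U k ((W i s).comp h * (h ^ (p - 1 - n) * X ^ (s : ℕ)))) = 0 := by
    refine Finset.sum_eq_zero fun k _ => ?_
    refine Finset.sum_eq_zero fun p hp => ?_
    have hpm : p - 1 - n < m + 1 := by
      simp only [Finset.mem_Ioc] at hp; omega
    have hz := hl (p - 1 - n) hpm
    have hent : U k (h ^ (p - 1 - n) * Bvec W h i) = 0 := by
      have h0 : applyU U (fun i' => h ^ (p - 1 - n) * Bvec W h i') i k = 0 := by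
        rw [hz]; rfl
      simpa [applyU] using h0
    have hsum : (∑ s, (W i s).comp h * (h ^ (p - 1 - n) * X ^ (s : ℕ)))
        = h ^ (p - 1 - n) * Bvec W h i := by
      have hb : Bvec W h i = ∑ s, compH W h i s * P0 N s := rfl
      rw [hb, Finset.mul_sum]
      refine Finset.sum_congr rfl fun s _ => ?_
      simp only [compH, Matrix.map_apply, P0]
      ring
    rw [← Finset.mul_sum, ← map_sum, hsum, hent, mul_zero]
  rw [hT1, hT2, sub_self]
lemma natDeg_Xsmul_sub {N : ℕ} (Q R : MatPoly N) (d : ℕ)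
    (hQ : ∀ i j, (Q i j).natDegree ≤ d) (hR : ∀ i j, (R i j).natDegree ≤ d + 1) :
    ∀ i j, ((((Polynomial.X : Polynomial ℂ) • Q) - R) i j).natDegree ≤ d + 1 := by
  intro i j
  simp only [Matrix.sub_apply, Matrix.smul_apply, smul_eq_mul]
  refine (Polynomial.natDegree_sub_le _ _).trans (max_le ?_ (hR i j))
  refine Polynomial.natDegree_mul_le.trans ?_
  rw [Polynomial.natDegree_X]
  have := hQ i j; omega

lemma natDeg_Xsmul_sub_sub {N : ℕ} (Q R S : MatPoly N) (d : ℕ)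
    (hQ : ∀ i j, (Q i j).natDegree ≤ d) (hR : ∀ i j, (R i j).natDegree ≤ d + 1)
    (hS : ∀ i j, (S i j).natDegree ≤ d + 1) :
    ∀ i j, ((((Polynomial.X : Polynomial ℂ) • Q) - R - S) i j).natDegree ≤ d + 1 := by
  intro i j
  have h0 := natDeg_Xsmul_sub Q R d hQ hR i j
  simp only [Matrix.sub_apply]
  refine (Polynomial.natDegree_sub_le _ _).trans (max_le ?_ (hS i j))
  simpa [Matrix.sub_apply] using h0

end FKWaux

/-- Under the bi-orthogonality setup, for every `m ≥ 1` and all `z ∈ ℂ`: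
`B⁽¹⁾_{m-1}(z) G_m(z) - V_m(z) G⁽¹⁾_{m-1}(z) = 0`.  (Here `B⁽¹⁾_{m-1} = assocB U (V m) h`
and `G⁽¹⁾_{m-1} = assocG U (G m) h`; the statement is quantified over `m + 1`, `m ∈ ℕ`.) -/
theorem first_kind_wronskian_vanishes
    (N : ℕ) (hN : 1 ≤ N)
    (U : Fin N → (Polynomial ℂ →ₗ[ℂ] ℂ))
    (h : Polynomial ℂ) (hdeg : h.natDegree = N)
    (A B C : ℕ → Matrix (Fin N) (Fin N) ℂ)
    (hA : ∀ m, IsUnit (A m)) (hC : ∀ m, IsUnit (C m))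
    (V G : ℕ → MatPoly N)
    (hV0I : V 0 = 1)
    (g0 : Matrix (Fin N) (Fin N) ℂ) (hg0 : IsUnit g0)
    (hG0c : G 0 = g0.map fun a => Polynomial.C a)
    (hVrec0 : ∀ z : ℂ, z • evalM (V 0) z = A 0 * evalM (V 1) z + B 0 * evalM (V 0) z)
    (hVrec : ∀ (m : ℕ) (z : ℂ), z • evalM (V (m + 1)) z =
      A (m + 1) * evalM (V (m + 2)) z + B (m + 1) * evalM (V (m + 1)) z +
        C (m + 1) * evalM (V m) z)
    (hGrec0 : ∀ z : ℂ, z • evalM (G 0) z = evalM (G 0) z * B 0 + evalM (G 1) z * C 1)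
    (hGrec : ∀ (m : ℕ) (z : ℂ), z • evalM (G (m + 1)) z =
      evalM (G m) z * A m + evalM (G (m + 1)) z * B (m + 1) +
        evalM (G (m + 2)) z * C (m + 2))
    (hleft : ∀ m, ∀ k < m, applyU U (fun i => h ^ k * Bvec (V m) h i) = 0)
    (hleftn : ∀ m, IsUnit (applyU U fun i => h ^ m * Bvec (V m) h i))
    (hright : ∀ m, ∀ j < m,
      transApply U (compH (G m) h) (fun i => h ^ j * P0 N i) = 0)
    (hrightn : ∀ m, IsUnit (transApply U (compH (G m) h) fun i => h ^ m * P0 N i))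
    (hbi : ∀ n m, transApply U (compH (G n) h) (Bvec (V m) h) =
      if n = m then 1 else 0) :
    ∀ (m : ℕ) (z : ℂ),
      evalM (assocB U (V (m + 1)) h) z * evalM (G (m + 1)) z
        - evalM (V (m + 1)) z * evalM (assocG U (G (m + 1)) h) z = 0 := by
  classical
  -- polynomial-level recurrences
  have hVrec0' : FKWaux.MC (A 0) * V 1
      = (Polynomial.X : Polynomial ℂ) • V 0 - FKWaux.MC (B 0) * V 0 := by
    apply FKWaux.matPoly_ext; intro z
    rw [FKWaux.evalM_sub, FKWaux.evalM_MC_mul, FKWaux.evalM_MC_mul, FKWaux.evalM_Xsmul,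
      hVrec0 z]
    abel
  have hVrec' : ∀ m, FKWaux.MC (A (m + 1)) * V (m + 2)
      = (Polynomial.X : Polynomial ℂ) • V (m + 1) - FKWaux.MC (B (m + 1)) * V (m + 1)
        - FKWaux.MC (C (m + 1)) * V m := by
    intro m
    apply FKWaux.matPoly_ext; intro z
    rw [FKWaux.evalM_sub, FKWaux.evalM_sub, FKWaux.evalM_MC_mul, FKWaux.evalM_MC_mul,
      FKWaux.evalM_MC_mul, FKWaux.evalM_Xsmul, hVrec m z]
    abel
  have hGrec0' : G 1 * FKWaux.MC (C 1)
      = (Polynomial.X : Polynomial ℂ) • G 0 - G 0 * FKWaux.MC (B 0) := by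
    apply FKWaux.matPoly_ext; intro z
    rw [FKWaux.evalM_sub, FKWaux.evalM_mul_MC, FKWaux.evalM_mul_MC, FKWaux.evalM_Xsmul,
      hGrec0 z]
    abel
  have hGrec' : ∀ m, G (m + 2) * FKWaux.MC (C (m + 2))
      = (Polynomial.X : Polynomial ℂ) • G (m + 1) - G m * FKWaux.MC (A m)
        - G (m + 1) * FKWaux.MC (B (m + 1)) := by
    intro m
    apply FKWaux.matPoly_ext; intro z
    rw [FKWaux.evalM_sub, FKWaux.evalM_sub, FKWaux.evalM_mul_MC, FKWaux.evalM_mul_MC,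
      FKWaux.evalM_mul_MC, FKWaux.evalM_Xsmul, hGrec m z]
    abel
  -- degree bounds for V
  have hVdeg2 : ∀ m, (∀ i j, ((V m) i j).natDegree ≤ m)
      ∧ (∀ i j, ((V (m + 1)) i j).natDegree ≤ m + 1) := by
    intro m
    induction m with
    | zero =>
      have hd0 : ∀ i j, ((V 0) i j).natDegree ≤ 0 := by
        intro i j; rw [hV0I]
        by_cases hij : i = j <;> simp [Matrix.one_apply, hij]
      refine ⟨hd0, ?_⟩
      have hu : (A 0)⁻¹ * A 0 = 1 :=
        Matrix.nonsing_inv_mul _ ((Matrix.isUnit_iff_isUnit_det _).mp (hA 0))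
      have hV1e : V 1 = FKWaux.MC ((A 0)⁻¹)
          * ((Polynomial.X : Polynomial ℂ) • V 0 - FKWaux.MC (B 0) * V 0) := by
        rw [← hVrec0', ← Matrix.mul_assoc, FKWaux.MC_mul_MC, hu, FKWaux.MC_one,
          Matrix.one_mul]
      show ∀ i j, ((V 1) i j).natDegree ≤ 1
      rw [hV1e]
      exact FKWaux.natDeg_MC_mul _ _ 1
        (FKWaux.natDeg_Xsmul_sub (V 0) _ 0 hd0 (fun i j => (FKWaux.natDeg_MC_mul (B 0) (V 0) 0 hd0 i j).trans (Nat.le_succ 0)))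
    | succ k ih =>
      refine ⟨ih.2, ?_⟩
      have hu : (A (k + 1))⁻¹ * A (k + 1) = 1 :=
        Matrix.nonsing_inv_mul _ ((Matrix.isUnit_iff_isUnit_det _).mp (hA (k + 1)))
      have hVe : V (k + 2) = FKWaux.MC ((A (k + 1))⁻¹)
          * ((Polynomial.X : Polynomial ℂ) • V (k + 1) - FKWaux.MC (B (k + 1)) * V (k + 1)
              - FKWaux.MC (C (k + 1)) * V k) := by
        rw [← hVrec' k, ← Matrix.mul_assoc, FKWaux.MC_mul_MC, hu, FKWaux.MC_one,
          Matrix.one_mul]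
      show ∀ i j, ((V (k + 2)) i j).natDegree ≤ k + 2
      rw [hVe]
      refine FKWaux.natDeg_MC_mul _ _ (k + 2)
        (FKWaux.natDeg_Xsmul_sub_sub (V (k + 1)) _ _ (k + 1) ih.2
          (FKWaux.natDeg_MC_mul _ _ (k + 2) ?_)
          (FKWaux.natDeg_MC_mul _ _ (k + 2) ?_))
      · exact fun i j => (ih.2 i j).trans (by omega)
      · exact fun i j => (ih.1 i j).trans (by omega)
  -- degree bounds for G
  have hGdeg2 : ∀ m, (∀ i j, ((G m) i j).natDegree ≤ m)
      ∧ (∀ i j, ((G (m + 1)) i j).natDegree ≤ m + 1) := by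
    intro m
    induction m with
    | zero =>
      have hd0 : ∀ i j, ((G 0) i j).natDegree ≤ 0 := by
        intro i j; rw [hG0c]; simp [Matrix.map_apply]
      refine ⟨hd0, ?_⟩
      have hu : C 1 * (C 1)⁻¹ = 1 :=
        Matrix.mul_nonsing_inv _ ((Matrix.isUnit_iff_isUnit_det _).mp (hC 1))
      have hG1e : G 1 = ((Polynomial.X : Polynomial ℂ) • G 0 - G 0 * FKWaux.MC (B 0))
          * FKWaux.MC ((C 1)⁻¹) := by
        rw [← hGrec0', Matrix.mul_assoc, FKWaux.MC_mul_MC, hu, FKWaux.MC_one,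
          Matrix.mul_one]
      show ∀ i j, ((G 1) i j).natDegree ≤ 1
      rw [hG1e]
      exact FKWaux.natDeg_mul_MC _ _ 1
        (FKWaux.natDeg_Xsmul_sub (G 0) _ 0 hd0 (fun i j => (FKWaux.natDeg_mul_MC (B 0) (G 0) 0 hd0 i j).trans (Nat.le_succ 0)))
    | succ k ih =>
      refine ⟨ih.2, ?_⟩
      have hu : C (k + 2) * (C (k + 2))⁻¹ = 1 :=
        Matrix.mul_nonsing_inv _ ((Matrix.isUnit_iff_isUnit_det _).mp (hC (k + 2)))
      have hGe : G (k + 2) = ((Polynomial.X : Polynomial ℂ) • G (k + 1)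
            - G k * FKWaux.MC (A k) - G (k + 1) * FKWaux.MC (B (k + 1)))
          * FKWaux.MC ((C (k + 2))⁻¹) := by
        rw [← hGrec' k, Matrix.mul_assoc, FKWaux.MC_mul_MC, hu, FKWaux.MC_one,
          Matrix.mul_one]
      show ∀ i j, ((G (k + 2)) i j).natDegree ≤ k + 2
      rw [hGe]
      refine FKWaux.natDeg_mul_MC _ _ (k + 2)
        (FKWaux.natDeg_Xsmul_sub_sub (G (k + 1)) _ _ (k + 1) ih.2
          (FKWaux.natDeg_mul_MC _ _ (k + 2) ?_)
          (FKWaux.natDeg_mul_MC _ _ (k + 2) ?_))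
      · exact fun i j => (ih.1 i j).trans (by omega)
      · exact fun i j => (ih.2 i j).trans (by omega)
  intro m z
  have hkey := FKWaux.key_identity U h (V (m + 1)) (G (m + 1)) m
    (hVdeg2 m).2 (hGdeg2 m).2
    (fun k hk => hleft (m + 1) k hk) (fun j hj => hright (m + 1) j hj)
  have h2 := congrArg (fun Q => evalM Q z) hkey
  simp only [FKWaux.evalM_mul] at h2
  rw [h2, sub_self]

end
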